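/- Let A ∈ ℝ^{n×n} be symmetric with eigendecomposition A = UΛUᵀ where eigenvalues are sorted by decreasing magnitude, and let U_p ∈ ℝ^{n×p} contain the eigenvectors corresponding to the p largest-magnitude eigenvalues. Let Q ∈ ℝ^{n×r} have orthonormal columns, and suppose ‖U_p - QQᵀU_p‖_F ≤ ε. Then ‖U_pᵀAU_p - U_pᵀQQᵀAQQᵀU_p‖₂ ≤ 3ε‖A‖₂, and consequently, by Weyl's inequality, |λ_i(U_pᵀQQᵀAQQᵀU_p) - λ_i(A)| ≤ 3ε‖A‖₂ for every i ∈ [p]. -/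

import Mathlib

open Matrix

/-- The spectral (ℓ2 operator) norm of a real matrix. -/
noncomputable def specNorm {n m : ℕ} (A : Matrix (Fin n) (Fin m) ℝ) : ℝ :=
  ‖LinearMap.toContinuousLinearMap (Matrix.toEuclideanLin A)‖

/-- The Frobenius norm of a real matrix. -/
noncomputable def frobNorm {n m : ℕ} (A : Matrix (Fin n) (Fin m) ℝ) : ℝ :=
  Real.sqrt (∑ i, ∑ j, (A i j) ^ 2)

open scoped RealInnerProductSpace

lemma specNorm_nonneg {n m : ℕ} (A : Matrix (Fin n) (Fin m) ℝ) : 0 ≤ specNorm A :=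
  norm_nonneg _

lemma norm_toEuclideanLin_le {n m : ℕ} (A : Matrix (Fin n) (Fin m) ℝ)
    (x : EuclideanSpace ℝ (Fin m)) :
    ‖Matrix.toEuclideanLin A x‖ ≤ specNorm A * ‖x‖ := by
  simpa [specNorm] using (LinearMap.toContinuousLinearMap (Matrix.toEuclideanLin A)).le_opNorm x

lemma specNorm_le_of_bound {n m : ℕ} (A : Matrix (Fin n) (Fin m) ℝ) {c : ℝ} (hc : 0 ≤ c)
    (h : ∀ x : EuclideanSpace ℝ (Fin m), ‖Matrix.toEuclideanLin A x‖ ≤ c * ‖x‖) :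
    specNorm A ≤ c :=
  ContinuousLinearMap.opNorm_le_bound _ hc (by simpa using h)

lemma specNorm_add_le {n m : ℕ} (A B : Matrix (Fin n) (Fin m) ℝ) :
    specNorm (A + B) ≤ specNorm A + specNorm B := by
  refine specNorm_le_of_bound _ (add_nonneg (specNorm_nonneg _) (specNorm_nonneg _)) fun x => ?_
  rw [map_add]
  calc ‖Matrix.toEuclideanLin A x + Matrix.toEuclideanLin B x‖
      ≤ ‖Matrix.toEuclideanLin A x‖ + ‖Matrix.toEuclideanLin B x‖ := norm_add_le _ _
    _ ≤ specNorm A * ‖x‖ + specNorm B * ‖x‖ :=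
        add_le_add (norm_toEuclideanLin_le _ _) (norm_toEuclideanLin_le _ _)
    _ = (specNorm A + specNorm B) * ‖x‖ := by ring

lemma toEuclideanLin_mul {n m k : ℕ} (A : Matrix (Fin n) (Fin m) ℝ)
    (B : Matrix (Fin m) (Fin k) ℝ) (x : EuclideanSpace ℝ (Fin k)) :
    Matrix.toEuclideanLin (A * B) x = Matrix.toEuclideanLin A (Matrix.toEuclideanLin B x) := by
  simp [Matrix.toEuclideanLin_apply, Matrix.mulVec_mulVec]

lemma specNorm_mul_le {n m k : ℕ} (A : Matrix (Fin n) (Fin m) ℝ)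
    (B : Matrix (Fin m) (Fin k) ℝ) :
    specNorm (A * B) ≤ specNorm A * specNorm B := by
  refine specNorm_le_of_bound _ (mul_nonneg (specNorm_nonneg _) (specNorm_nonneg _)) fun x => ?_
  rw [toEuclideanLin_mul]
  calc ‖Matrix.toEuclideanLin A (Matrix.toEuclideanLin B x)‖
      ≤ specNorm A * ‖Matrix.toEuclideanLin B x‖ := norm_toEuclideanLin_le _ _
    _ ≤ specNorm A * (specNorm B * ‖x‖) :=
        mul_le_mul_of_nonneg_left (norm_toEuclideanLin_le _ _) (specNorm_nonneg _)
    _ = specNorm A * specNorm B * ‖x‖ := by ring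

lemma specNorm_neg {n m : ℕ} (A : Matrix (Fin n) (Fin m) ℝ) : specNorm (-A) = specNorm A := by
  unfold specNorm
  rw [map_neg, map_neg, norm_neg]

lemma specNorm_transpose {n m : ℕ} (A : Matrix (Fin n) (Fin m) ℝ) :
    specNorm Aᵀ = specNorm A := by
  have h : Aᵀ = Aᴴ := by ext i j; simp [Matrix.conjTranspose_apply]
  rw [h]
  unfold specNorm
  rw [Matrix.toEuclideanLin_conjTranspose_eq_adjoint, LinearMap.adjoint_toContinuousLinearMap]
  exact ContinuousLinearMap.adjoint.norm_map _

lemma euclidean_norm_sq {m : ℕ} (x : EuclideanSpace ℝ (Fin m)) :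
    ‖x‖ ^ 2 = ∑ j, (x j) ^ 2 := by
  rw [EuclideanSpace.norm_eq]
  rw [Real.sq_sqrt (by positivity)]
  simp [sq_abs]

lemma norm_toEL_sq {n m : ℕ} (A : Matrix (Fin n) (Fin m) ℝ) (x : EuclideanSpace ℝ (Fin m)) :
    ‖Matrix.toEuclideanLin A x‖ ^ 2 = ∑ i, (A.mulVec (fun j => x j) i) ^ 2 := by
  rw [euclidean_norm_sq]
  rfl

lemma norm_isometry {n m : ℕ} (U : Matrix (Fin n) (Fin m) ℝ) (hU : Uᵀ * U = 1)
    (x : EuclideanSpace ℝ (Fin m)) :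
    ‖Matrix.toEuclideanLin U x‖ = ‖x‖ := by
  have h2 : ‖Matrix.toEuclideanLin U x‖ ^ 2 = ‖x‖ ^ 2 := by
    rw [norm_toEL_sq, euclidean_norm_sq]
    have : ∑ i, (U.mulVec (fun j => x j) i) ^ 2
        = (U.mulVec fun j => x j) ⬝ᵥ (U.mulVec fun j => x j) := by
      simp [dotProduct, sq]
    rw [this, Matrix.dotProduct_mulVec, ← Matrix.mulVec_transpose, Matrix.mulVec_mulVec, hU]
    simp [dotProduct, sq]
  nlinarith [norm_nonneg (Matrix.toEuclideanLin U x), norm_nonneg x]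

lemma frobNorm_nonneg {n m : ℕ} (A : Matrix (Fin n) (Fin m) ℝ) : 0 ≤ frobNorm A :=
  Real.sqrt_nonneg _

lemma frobNorm_transpose {n m : ℕ} (A : Matrix (Fin n) (Fin m) ℝ) :
    frobNorm Aᵀ = frobNorm A := by
  unfold frobNorm
  congr 1
  rw [Finset.sum_comm]
  simp [Matrix.transpose_apply]

lemma specNorm_le_frobNorm {n m : ℕ} (A : Matrix (Fin n) (Fin m) ℝ) :
    specNorm A ≤ frobNorm A := by
  refine specNorm_le_of_bound _ (frobNorm_nonneg A) fun x => ?_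
  have key : ‖Matrix.toEuclideanLin A x‖ ^ 2 ≤ (frobNorm A * ‖x‖) ^ 2 := by
    rw [norm_toEL_sq]
    have h1 : ∀ i, (A.mulVec (fun j => x j) i) ^ 2
        ≤ (∑ j, (A i j) ^ 2) * (∑ j, (x j) ^ 2) := by
      intro i
      have := Finset.sum_mul_sq_le_sq_mul_sq Finset.univ (fun j => A i j) (fun j => x j)
      simpa [Matrix.mulVec, dotProduct] using this
    calc ∑ i, (A.mulVec (fun j => x j) i) ^ 2
        ≤ ∑ i, (∑ j, (A i j) ^ 2) * (∑ j, (x j) ^ 2) := Finset.sum_le_sum fun i _ => h1 i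
      _ = (∑ i, ∑ j, (A i j) ^ 2) * (∑ j, (x j) ^ 2) := by rw [← Finset.sum_mul]
      _ = (frobNorm A * ‖x‖) ^ 2 := by
          rw [mul_pow, euclidean_norm_sq, frobNorm, Real.sq_sqrt (by positivity)]
  calc ‖Matrix.toEuclideanLin A x‖
      = Real.sqrt (‖Matrix.toEuclideanLin A x‖ ^ 2) := (Real.sqrt_sq (norm_nonneg _)).symm
    _ ≤ Real.sqrt ((frobNorm A * ‖x‖) ^ 2) := Real.sqrt_le_sqrt key
    _ = frobNorm A * ‖x‖ := Real.sqrt_sq (mul_nonneg (frobNorm_nonneg _) (norm_nonneg _))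

variable {p : ℕ}

lemma inner_eq_zero_of_mem_span (b : OrthonormalBasis (Fin p) ℝ (EuclideanSpace ℝ (Fin p)))
    {ι : Type*} (f : ι → Fin p) {x : EuclideanSpace ℝ (Fin p)}
    (hx : x ∈ Submodule.span ℝ (Set.range fun j => b (f j)))
    (i : Fin p) (hi : ∀ j, f j ≠ i) : ⟪b i, x⟫ = 0 := by
  induction hx using Submodule.span_induction with
  | mem y hy =>
      obtain ⟨j, rfl⟩ := hy
      exact b.orthonormal.2 (Ne.symm (hi j))
  | zero => exact inner_zero_right _
  | add y z _ _ hy hz => rw [inner_add_right, hy, hz, add_zero]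
  | smul a y _ hy => rw [inner_smul_right, hy, mul_zero]

lemma inner_map_self_eq_sum (b : OrthonormalBasis (Fin p) ℝ (EuclideanSpace ℝ (Fin p)))
    (T : EuclideanSpace ℝ (Fin p) →ₗ[ℝ] EuclideanSpace ℝ (Fin p)) (β : Fin p → ℝ)
    (hT : ∀ i, T (b i) = β i • b i) (x : EuclideanSpace ℝ (Fin p)) :
    ⟪x, T x⟫ = ∑ i, β i * ⟪b i, x⟫ ^ 2 := by
  have hTx : T x = ∑ i, (⟪b i, x⟫ * β i) • b i := by
    conv_lhs => rw [← b.sum_repr' x, map_sum]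
    refine Finset.sum_congr rfl fun i _ => ?_
    rw [LinearMap.map_smul, hT i, smul_smul]
  rw [hTx, inner_sum]
  refine Finset.sum_congr rfl fun i _ => ?_
  rw [real_inner_smul_right, real_inner_comm x (b i)]
  ring

lemma norm_sq_eq_sum (b : OrthonormalBasis (Fin p) ℝ (EuclideanSpace ℝ (Fin p)))
    (x : EuclideanSpace ℝ (Fin p)) : ‖x‖ ^ 2 = ∑ i, ⟪b i, x⟫ ^ 2 := by
  have h := inner_map_self_eq_sum b LinearMap.id (fun _ => 1)
    (fun i => (one_smul ℝ (b i)).symm) x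
  simp only [LinearMap.id_apply, one_mul] at h
  rw [← real_inner_self_eq_norm_sq, h]

lemma quad_ge (b : OrthonormalBasis (Fin p) ℝ (EuclideanSpace ℝ (Fin p)))
    (T : EuclideanSpace ℝ (Fin p) →ₗ[ℝ] EuclideanSpace ℝ (Fin p)) (β : Fin p → ℝ)
    (hβ : Antitone β) (hT : ∀ i, T (b i) = β i • b i) (x : EuclideanSpace ℝ (Fin p))
    (k : Fin p) (hcoef : ∀ i, k < i → ⟪b i, x⟫ = 0) :
    β k * ‖x‖ ^ 2 ≤ ⟪x, T x⟫ := by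
  rw [inner_map_self_eq_sum b T β hT, norm_sq_eq_sum b x, Finset.mul_sum]
  refine Finset.sum_le_sum fun i _ => ?_
  by_cases h : i ≤ k
  · exact mul_le_mul_of_nonneg_right (hβ h) (sq_nonneg _)
  · rw [hcoef i (lt_of_not_ge h)]
    simp

lemma quad_le (b : OrthonormalBasis (Fin p) ℝ (EuclideanSpace ℝ (Fin p)))
    (T : EuclideanSpace ℝ (Fin p) →ₗ[ℝ] EuclideanSpace ℝ (Fin p)) (β : Fin p → ℝ)
    (hβ : Antitone β) (hT : ∀ i, T (b i) = β i • b i) (x : EuclideanSpace ℝ (Fin p))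
    (k : Fin p) (hcoef : ∀ i, i < k → ⟪b i, x⟫ = 0) :
    ⟪x, T x⟫ ≤ β k * ‖x‖ ^ 2 := by
  rw [inner_map_self_eq_sum b T β hT, norm_sq_eq_sum b x, Finset.mul_sum]
  refine Finset.sum_le_sum fun i _ => ?_
  by_cases h : k ≤ i
  · exact mul_le_mul_of_nonneg_right (hβ h) (sq_nonneg _)
  · rw [hcoef i (lt_of_not_ge h)]
    simp

lemma weyl_le {p : ℕ} (M N : Matrix (Fin p) (Fin p) ℝ)
    (b c : OrthonormalBasis (Fin p) ℝ (EuclideanSpace ℝ (Fin p))) (α β : Fin p → ℝ)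
    (hα : Antitone α) (hβ : Antitone β)
    (hM : ∀ i, Matrix.toEuclideanLin M (b i) = α i • b i)
    (hN : ∀ i, Matrix.toEuclideanLin N (c i) = β i • c i) (k : Fin p) :
    α k - specNorm (M - N) ≤ β k := by
  have hk1 : (k : ℕ) + 1 ≤ p := k.isLt
  set f : Fin ((k : ℕ) + 1) → Fin p := fun j => ⟨j, by omega⟩ with hf
  set g : Fin (p - (k : ℕ)) → Fin p := fun j => ⟨(k : ℕ) + j, by omega⟩ with hg
  have hfinj : Function.Injective f := by
    intro a b h
    have : (a : ℕ) = b := by simpa [hf, Fin.ext_iff] using h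
    exact Fin.ext this
  have hginj : Function.Injective g := by
    intro a b h
    have : (k : ℕ) + a = (k : ℕ) + b := by simpa [hg, Fin.ext_iff] using h
    exact Fin.ext (by omega)
  set V := Submodule.span ℝ (Set.range fun j => b (f j)) with hV
  set W := Submodule.span ℝ (Set.range fun j => c (g j)) with hW
  have hVrank : Module.finrank ℝ V = (k : ℕ) + 1 := by
    have h := finrank_span_eq_card (b.orthonormal.linearIndependent.comp f hfinj)
    rw [Fintype.card_fin] at h; exact h
  have hWrank : Module.finrank ℝ W = p - (k : ℕ) := by
    have h := finrank_span_eq_card (c.orthonormal.linearIndependent.comp g hginj)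
    rw [Fintype.card_fin] at h; exact h
  have hsum := Submodule.finrank_sup_add_finrank_inf_eq V W
  have hle : Module.finrank ℝ ↥(V ⊔ W) ≤ p := by
    have := Submodule.finrank_le (V ⊔ W)
    simpa [finrank_euclideanSpace_fin] using this
  have hpos : 0 < Module.finrank ℝ ↥(V ⊓ W) := by omega
  have hne : V ⊓ W ≠ ⊥ := by
    intro h
    rw [h, finrank_bot] at hpos
    omega
  obtain ⟨x, hxVW, hx0⟩ := Submodule.exists_mem_ne_zero_of_ne_bot hne
  have hxV : x ∈ V := hxVW.1
  have hxW : x ∈ W := hxVW.2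
  have hcb : ∀ i, k < i → ⟪b i, x⟫ = 0 := by
    intro i hi
    refine inner_eq_zero_of_mem_span b f hxV i fun j => ?_
    have h1 : (j : ℕ) < (k : ℕ) + 1 := j.isLt
    have h2 : (k : ℕ) < (i : ℕ) := hi
    exact Fin.ne_of_val_ne (by simp [hf]; omega)
  have hcc : ∀ i, i < k → ⟪c i, x⟫ = 0 := by
    intro i hi
    refine inner_eq_zero_of_mem_span c g hxW i fun j => ?_
    have h2 : (i : ℕ) < (k : ℕ) := hi
    exact Fin.ne_of_val_ne (by simp [hg]; omega)
  have h1 := quad_ge b (Matrix.toEuclideanLin M) α hα hM x k hcb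
  have h2 := quad_le c (Matrix.toEuclideanLin N) β hβ hN x k hcc
  have h3 : ⟪x, Matrix.toEuclideanLin M x⟫ - ⟪x, Matrix.toEuclideanLin N x⟫
      = ⟪x, Matrix.toEuclideanLin (M - N) x⟫ := by
    rw [map_sub, LinearMap.sub_apply, inner_sub_right]
  have h4 : ⟪x, Matrix.toEuclideanLin (M - N) x⟫ ≤ ‖x‖ * (specNorm (M - N) * ‖x‖) :=
    le_trans (real_inner_le_norm _ _)
      (mul_le_mul_of_nonneg_left (norm_toEuclideanLin_le _ _) (norm_nonneg x))
  have hx : 0 < ‖x‖ := norm_pos_iff.2 hx0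
  nlinarith [h1, h2, h3, h4, mul_pos hx hx]

lemma weyl_abs {p : ℕ} (M N : Matrix (Fin p) (Fin p) ℝ)
    (b c : OrthonormalBasis (Fin p) ℝ (EuclideanSpace ℝ (Fin p))) (α β : Fin p → ℝ)
    (hα : Antitone α) (hβ : Antitone β)
    (hM : ∀ i, Matrix.toEuclideanLin M (b i) = α i • b i)
    (hN : ∀ i, Matrix.toEuclideanLin N (c i) = β i • c i) (k : Fin p) :
    |α k - β k| ≤ specNorm (M - N) := by
  have hnm : specNorm (N - M) = specNorm (M - N) := by
    rw [← specNorm_neg (N - M), neg_sub]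
  rw [abs_sub_le_iff]
  constructor
  · have := weyl_le M N b c α β hα hβ hM hN k
    linarith
  · have := weyl_le N M c b β α hβ hα hN hM k
    rw [hnm] at this
    linarith

/-- Let `A` be symmetric with `U ∈ ℝ^{n×p}` an orthonormal matrix of
eigenvectors for the `p` largest-magnitude eigenvalues `lam` (sorted by decreasing
magnitude), let `Q` have orthonormal columns and suppose `‖U - QQᵀU‖_F ≤ ε`. Then
`‖UᵀAU - UᵀQQᵀAQQᵀU‖₂ ≤ 3ε‖A‖₂`, and by Weyl's inequality the eigenvalues of
`UᵀQQᵀAQQᵀU` match the eigenvalues `lam` of `A` to within `3ε‖A‖₂`. -/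
theorem stmt_5 {n p r : ℕ} (A : Matrix (Fin n) (Fin n) ℝ) (hA : Aᵀ = A)
    (U : Matrix (Fin n) (Fin p) ℝ) (hU : Uᵀ * U = 1)
    (lam : Fin p → ℝ) (hsort : Antitone fun i => |lam i|)
    (hEig : A * U = U * Matrix.diagonal lam)
    (Q : Matrix (Fin n) (Fin r) ℝ) (hQ : Qᵀ * Q = 1)
    (ε : ℝ) (hε : 0 ≤ ε)
    (hproj : frobNorm (U - Q * Qᵀ * U) ≤ ε)
    (hS : (Uᵀ * (Q * Qᵀ * A * (Q * Qᵀ)) * U).IsHermitian) :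
    specNorm (Uᵀ * A * U - Uᵀ * (Q * Qᵀ * A * (Q * Qᵀ)) * U) ≤ 3 * ε * specNorm A ∧
    ∃ σ : Equiv.Perm (Fin p), ∀ i, |hS.eigenvalues (σ i) - lam i| ≤ 3 * ε * specNorm A := by
  set S := Uᵀ * (Q * Qᵀ * A * (Q * Qᵀ)) * U with hSdef
  -- U^T A U = diagonal lam
  have hUAU : Uᵀ * A * U = Matrix.diagonal lam := by
    calc Uᵀ * A * U = Uᵀ * (A * U) := Matrix.mul_assoc _ _ _
      _ = Uᵀ * (U * Matrix.diagonal lam) := by rw [hEig]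
      _ = Uᵀ * U * Matrix.diagonal lam := (Matrix.mul_assoc _ _ _).symm
      _ = Matrix.diagonal lam := by rw [hU, Matrix.one_mul]
  -- key decomposition
  have key : Uᵀ * A * U - S
      = Uᵀ * A * (U - Q * Qᵀ * U) + (U - Q * Qᵀ * U)ᵀ * (A * (Q * Qᵀ * U)) := by
    rw [hSdef]
    simp only [Matrix.transpose_sub, Matrix.transpose_mul, Matrix.transpose_transpose,
      Matrix.sub_mul, Matrix.mul_sub, Matrix.mul_assoc]
    abel
  -- norm bounds
  have sE : specNorm (U - Q * Qᵀ * U) ≤ ε := (specNorm_le_frobNorm _).trans hproj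
  have sEt : specNorm (U - Q * Qᵀ * U)ᵀ ≤ ε := by rwa [specNorm_transpose]
  have sU : specNorm U ≤ 1 := specNorm_le_of_bound _ zero_le_one fun x => by
    rw [norm_isometry U hU, one_mul]
  have sUt : specNorm Uᵀ ≤ 1 := by rwa [specNorm_transpose]
  have sQ : specNorm Q ≤ 1 := specNorm_le_of_bound _ zero_le_one fun x => by
    rw [norm_isometry Q hQ, one_mul]
  have sQt : specNorm Qᵀ ≤ 1 := by rwa [specNorm_transpose]
  have sP : specNorm (Q * Qᵀ) ≤ 1 :=
    (specNorm_mul_le Q Qᵀ).trans (mul_le_one₀ sQ (specNorm_nonneg _) sQt)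
  have sA := specNorm_nonneg A
  have bound1 : specNorm (Uᵀ * A * (U - Q * Qᵀ * U)) ≤ ε * specNorm A := by
    have h3 := specNorm_nonneg (Uᵀ * A)
    calc specNorm (Uᵀ * A * (U - Q * Qᵀ * U))
        ≤ specNorm (Uᵀ * A) * specNorm (U - Q * Qᵀ * U) := specNorm_mul_le _ _
      _ ≤ specNorm (Uᵀ * A) * ε := mul_le_mul_of_nonneg_left sE h3
      _ ≤ (specNorm Uᵀ * specNorm A) * ε :=
          mul_le_mul_of_nonneg_right (specNorm_mul_le _ _) hε
      _ ≤ (1 * specNorm A) * ε :=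
          mul_le_mul_of_nonneg_right (mul_le_mul_of_nonneg_right sUt sA) hε
      _ = ε * specNorm A := by ring
  have bound2 : specNorm ((U - Q * Qᵀ * U)ᵀ * (A * (Q * Qᵀ * U))) ≤ ε * specNorm A := by
    have h4 := specNorm_nonneg (A * (Q * Qᵀ * U))
    have hs3 : specNorm (Q * Qᵀ * U) ≤ 1 :=
      (specNorm_mul_le (Q * Qᵀ) U).trans (mul_le_one₀ sP (specNorm_nonneg _) sU)
    have hs2 : specNorm (A * (Q * Qᵀ * U)) ≤ specNorm A :=
      (specNorm_mul_le A (Q * Qᵀ * U)).trans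
        (by simpa using mul_le_mul_of_nonneg_left hs3 sA)
    calc specNorm ((U - Q * Qᵀ * U)ᵀ * (A * (Q * Qᵀ * U)))
        ≤ specNorm (U - Q * Qᵀ * U)ᵀ * specNorm (A * (Q * Qᵀ * U)) := specNorm_mul_le _ _
      _ ≤ ε * specNorm (A * (Q * Qᵀ * U)) := mul_le_mul_of_nonneg_right sEt h4
      _ ≤ ε * specNorm A := mul_le_mul_of_nonneg_left hs2 hε
  have part1 : specNorm (Uᵀ * A * U - S) ≤ 3 * ε * specNorm A := by
    rw [key]
    have := specNorm_add_le (Uᵀ * A * (U - Q * Qᵀ * U))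
      ((U - Q * Qᵀ * U)ᵀ * (A * (Q * Qᵀ * U)))
    nlinarith [mul_nonneg hε sA]
  refine ⟨part1, ?_⟩
  -- sorting permutations
  set τ : Equiv.Perm (Fin p) := Tuple.sort (fun i => -lam i) with hτdef
  set ρ : Equiv.Perm (Fin p) := Tuple.sort (fun i => -(hS.eigenvalues i)) with hρdef
  have hτanti : Antitone fun k => lam (τ k) := by
    intro a b hab
    have := Tuple.monotone_sort (fun i => -lam i) hab
    simpa using this
  have hρanti : Antitone fun k => hS.eigenvalues (ρ k) := by
    intro a b hab
    have := Tuple.monotone_sort (fun i => -(hS.eigenvalues i)) hab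
    simpa using this
  set b : OrthonormalBasis (Fin p) ℝ (EuclideanSpace ℝ (Fin p)) :=
    (EuclideanSpace.basisFun (Fin p) ℝ).reindex τ.symm with hbdef
  set c : OrthonormalBasis (Fin p) ℝ (EuclideanSpace ℝ (Fin p)) :=
    hS.eigenvectorBasis.reindex ρ.symm with hcdef
  have hMb : ∀ k, Matrix.toEuclideanLin (Matrix.diagonal lam) (b k) = lam (τ k) • b k := by
    intro k
    ext j
    simp only [hbdef, OrthonormalBasis.reindex_apply, Equiv.symm_symm,
      EuclideanSpace.basisFun_apply, Matrix.toEuclideanLin_apply]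
    show (Matrix.diagonal lam *ᵥ fun j => EuclideanSpace.single (τ k) (1:ℝ) j) j
      = lam (τ k) * EuclideanSpace.single (τ k) (1:ℝ) j
    rw [Matrix.mulVec_diagonal]
    simp only [EuclideanSpace.single_apply]
    by_cases h : j = τ k
    · simp [h]
    · simp [h]
  have hNc : ∀ k, Matrix.toEuclideanLin S (c k) = hS.eigenvalues (ρ k) • c k := by
    intro k
    ext j
    simp only [hcdef, OrthonormalBasis.reindex_apply, Equiv.symm_symm,
      Matrix.toEuclideanLin_apply]
    show (S *ᵥ fun j => hS.eigenvectorBasis (ρ k) j) j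
      = hS.eigenvalues (ρ k) * hS.eigenvectorBasis (ρ k) j
    have := hS.mulVec_eigenvectorBasis (ρ k)
    calc (S *ᵥ fun j => hS.eigenvectorBasis (ρ k) j) j
        = (S *ᵥ ⇑(hS.eigenvectorBasis (ρ k))) j := rfl
      _ = (hS.eigenvalues (ρ k) • ⇑(hS.eigenvectorBasis (ρ k))) j := by rw [this]
      _ = hS.eigenvalues (ρ k) * hS.eigenvectorBasis (ρ k) j := rfl
  have weyl := weyl_abs (Matrix.diagonal lam) S b c
    (fun k => lam (τ k)) (fun k => hS.eigenvalues (ρ k)) hτanti hρanti hMb hNc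
  refine ⟨τ.symm.trans ρ, fun i => ?_⟩
  have h := weyl (τ.symm i)
  simp only [Equiv.apply_symm_apply] at h
  have hDS : specNorm (Matrix.diagonal lam - S) ≤ 3 * ε * specNorm A := by
    rwa [hUAU] at part1
  rw [Equiv.trans_apply, abs_sub_comm]
  exact h.trans hDS
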